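/- Let k be a field of characteristic p, X a 2×2 matrix of variables, m the homogeneous maximal ideal of k[X], and I_2(X) the ideal generated by the determinant of X. For q a power of p and s ≥ 2 with sq an integer, the k-vector space dimension of k[X]/(m^{sq} + m^{[q]} + I_2(X)) equals (4/3)q^3 − (1/3)q. -/

import Mathlib

open MvPolynomial Finsupp Finset

namespace Stmt16Aux


def TS (q : ℕ) : Finset (ℕ × ℕ × ℕ × ℕ) :=
  (Finset.range q ×ˢ Finset.range q).biUnion fun jk =>
    ((Finset.range (q - min jk.1 jk.2)).image fun a => (a, jk.1, jk.2, 0)) ∪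
    ((Finset.range (q - min jk.1 jk.2)).image fun d => (0, jk.1, jk.2, d))

lemma mem_TS {q a b c d : ℕ} :
    (a, b, c, d) ∈ TS q ↔ (a = 0 ∨ d = 0) ∧ a + d + min b c < q ∧ b < q ∧ c < q := by
  simp only [TS, Finset.mem_biUnion, Finset.mem_product, Finset.mem_union, Finset.mem_image,
    Finset.mem_range, Prod.mk.injEq, Prod.exists]
  constructor
  · rintro ⟨j, kk, ⟨hj, hk⟩, (⟨x, hx, h1, h2, h3, h4⟩ | ⟨x, hx, h1, h2, h3, h4⟩)⟩ <;>
      subst h2 <;> subst h3 <;> omega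
  · rintro ⟨hor, h1, hb, hc⟩
    refine ⟨b, c, ⟨hb, hc⟩, ?_⟩
    rcases hor with h | h
    · exact Or.inr ⟨d, by omega, by omega, rfl, rfl, rfl⟩
    · exact Or.inl ⟨a, by omega, rfl, rfl, rfl, by omega⟩

lemma sum_max (q : ℕ) :
    3 * (∑ j ∈ Finset.range q, ∑ kk ∈ Finset.range q, (2 * max j kk + 1)) + q = 4 * q ^ 3 := by
  induction q with
  | zero => simp
  | succ n ih =>
    have hstep : ∑ j ∈ Finset.range (n+1), ∑ kk ∈ Finset.range (n+1), (2 * max j kk + 1)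
        = (∑ j ∈ Finset.range n, ∑ kk ∈ Finset.range n, (2 * max j kk + 1)) + (2*n+1)^2 := by
      rw [Finset.sum_range_succ]
      have h1 : ∀ j ∈ Finset.range n, ∑ kk ∈ Finset.range (n+1), (2 * max j kk + 1)
          = (∑ kk ∈ Finset.range n, (2 * max j kk + 1)) + (2*n+1) := by
        intro j hj
        rw [Finset.sum_range_succ]
        simp only [Finset.mem_range] at hj
        congr 1
        omega
      rw [Finset.sum_congr rfl h1]
      have h2 : ∑ kk ∈ Finset.range (n+1), (2 * max n kk + 1) = (n+1) * (2*n+1) := by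
        have : ∀ kk ∈ Finset.range (n+1), 2 * max n kk + 1 = 2*n+1 := by
          intro kk hk; simp only [Finset.mem_range] at hk; omega
        rw [Finset.sum_congr rfl this, Finset.sum_const, Finset.card_range, smul_eq_mul]
      rw [h2, Finset.sum_add_distrib, Finset.sum_const, Finset.card_range, smul_eq_mul]
      ring
    rw [hstep]
    have h4 : 4 * (n+1)^3 = 4*n^3 + (12*n^2 + 12*n + 4) := by ring
    have h5 : 3 * (2*n+1)^2 = 12*n^2+12*n+3 := by ring
    omega

lemma card_TS (q : ℕ) : 3 * (TS q).card = 4 * q ^ 3 - q := by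
  have hcard : (TS q).card = ∑ jk ∈ Finset.range q ×ˢ Finset.range q,
      (2 * (q - min jk.1 jk.2) - 1) := by
    rw [TS, Finset.card_biUnion]
    · refine Finset.sum_congr rfl fun jk hjk => ?_
      simp only [Finset.mem_product, Finset.mem_range] at hjk
      have hmin : min jk.1 jk.2 < q := by omega
      have hU := Finset.card_union_add_card_inter
        ((Finset.range (q - min jk.1 jk.2)).image fun a => (a, jk.1, jk.2, 0))
        ((Finset.range (q - min jk.1 jk.2)).image fun d => (0, jk.1, jk.2, d))
      have hA : (((Finset.range (q - min jk.1 jk.2)).image fun a => (a, jk.1, jk.2, 0)) ∩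
          ((Finset.range (q - min jk.1 jk.2)).image fun d => (0, jk.1, jk.2, d)))
          = {(0, jk.1, jk.2, 0)} := by
        ext ⟨x1, x2, x3, x4⟩
        simp only [Finset.mem_inter, Finset.mem_image, Finset.mem_range, Prod.mk.injEq,
          Finset.mem_singleton]
        constructor
        · rintro ⟨⟨y, hy, rfl, rfl, rfl, rfl⟩, ⟨z, hz, h1, h2, h3, h4⟩⟩
          exact ⟨h1.symm, rfl, rfl, rfl⟩
        · rintro ⟨rfl, rfl, rfl, rfl⟩
          exact ⟨⟨0, by omega, rfl, rfl, rfl, rfl⟩, ⟨0, by omega, rfl, rfl, rfl, rfl⟩⟩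
      rw [hA,
        Finset.card_image_of_injective _ (fun x y h => by simpa using h),
        Finset.card_image_of_injective _ (fun x y h => by simpa using h)] at hU
      simp only [Finset.card_range, Finset.card_singleton] at hU
      omega
    · intro x hx y hy hxy
      simp only [Finset.disjoint_left]
      intro z hz hz'
      apply hxy
      obtain ⟨z1, z2, z3, z4⟩ := z
      simp only [Finset.mem_union, Finset.mem_image, Finset.mem_range, Prod.mk.injEq] at hz hz'
      have e1 : x.1 = z2 ∧ x.2 = z3 := by
        rcases hz with ⟨w, _, _, h1, h2, _⟩ | ⟨w, _, _, h1, h2, _⟩ <;> exact ⟨h1, h2⟩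
      have e2 : y.1 = z2 ∧ y.2 = z3 := by
        rcases hz' with ⟨w, _, _, h1, h2, _⟩ | ⟨w, _, _, h1, h2, _⟩ <;> exact ⟨h1, h2⟩
      exact Prod.ext (e1.1.trans e2.1.symm) (e1.2.trans e2.2.symm)
  have href : ∑ j ∈ Finset.range q, ∑ kk ∈ Finset.range q, (2 * (q - min j kk) - 1)
      = ∑ j ∈ Finset.range q, ∑ kk ∈ Finset.range q, (2 * max j kk + 1) := by
    rw [← Finset.sum_range_reflect]
    refine Finset.sum_congr rfl fun j hj => ?_
    rw [← Finset.sum_range_reflect]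
    refine Finset.sum_congr rfl fun kk hk => ?_
    simp only [Finset.mem_range] at hj hk
    omega
  have := sum_max q
  rw [hcard, Finset.sum_product, href]
  omega





noncomputable def expv (x : ℕ × ℕ × ℕ × ℕ) : (Fin 2 × Fin 2) →₀ ℕ :=
  Finsupp.single (0,0) x.1 + Finsupp.single (0,1) x.2.1 +
    Finsupp.single (1,0) x.2.2.1 + Finsupp.single (1,1) x.2.2.2

lemma expv_apply_00 (x : ℕ × ℕ × ℕ × ℕ) : expv x (0,0) = x.1 := by
  simp [expv, Finsupp.single_apply, Prod.ext_iff]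

lemma expv_apply_01 (x : ℕ × ℕ × ℕ × ℕ) : expv x (0,1) = x.2.1 := by
  simp [expv, Finsupp.single_apply, Prod.ext_iff]

lemma expv_apply_10 (x : ℕ × ℕ × ℕ × ℕ) : expv x (1,0) = x.2.2.1 := by
  simp [expv, Finsupp.single_apply, Prod.ext_iff]

lemma expv_apply_11 (x : ℕ × ℕ × ℕ × ℕ) : expv x (1,1) = x.2.2.2 := by
  simp [expv, Finsupp.single_apply, Prod.ext_iff]

lemma expv_coords (m : (Fin 2 × Fin 2) →₀ ℕ) :
    expv (m (0,0), m (0,1), m (1,0), m (1,1)) = m := by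
  ext v
  obtain ⟨v1, v2⟩ := v
  fin_cases v1 <;> fin_cases v2 <;>
    simp [expv, Finsupp.single_apply, Prod.ext_iff]

lemma expv_add (x y : ℕ × ℕ × ℕ × ℕ) :
    expv (x.1 + y.1, x.2.1 + y.2.1, x.2.2.1 + y.2.2.1, x.2.2.2 + y.2.2.2) =
      expv x + expv y := by
  ext v
  obtain ⟨v1, v2⟩ := v
  fin_cases v1 <;> fin_cases v2 <;>
    simp [expv, Finsupp.single_apply, Prod.ext_iff] <;> ring

def red (m : (Fin 2 × Fin 2) →₀ ℕ) : ℕ × ℕ × ℕ × ℕ :=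
  (m (0,0) - min (m (0,0)) (m (1,1)), m (0,1) + min (m (0,0)) (m (1,1)),
   m (1,0) + min (m (0,0)) (m (1,1)), m (1,1) - min (m (0,0)) (m (1,1)))

lemma red_expv {x : ℕ × ℕ × ℕ × ℕ} (h : min x.1 x.2.2.2 = 0) : red (expv x) = x := by
  obtain ⟨a, b, c, d⟩ := x
  dsimp only at h
  simp only [red, expv_apply_00, expv_apply_01, expv_apply_10, expv_apply_11, Prod.mk.injEq]
  omega

variable (k : Type*) [Field k] (q : ℕ)

noncomputable def u (m : (Fin 2 × Fin 2) →₀ ℕ) : (↥(TS q) → k) :=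
  if h : red m ∈ TS q then Pi.single (⟨red m, h⟩ : ↥(TS q)) (1:k) else 0

noncomputable def φ : MvPolynomial (Fin 2 × Fin 2) k →ₗ[k] (↥(TS q) → k) :=
  (MvPolynomial.basisMonomials _ k).constr k (u k q)

lemma phi_monomial (m : (Fin 2 × Fin 2) →₀ ℕ) (c : k) :
    φ k q (monomial m c) = c • u k q m := by
  have h1 : (monomial m c : MvPolynomial (Fin 2 × Fin 2) k) = c • monomial m 1 := by
    rw [MvPolynomial.smul_monomial, smul_eq_mul, mul_one]
  rw [h1, map_smul]
  congr 1
  have := (MvPolynomial.basisMonomials (Fin 2 × Fin 2) k).constr_basis k (u k q) m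
  simpa [φ, MvPolynomial.coe_basisMonomials] using this

lemma phi_apply (f : MvPolynomial (Fin 2 × Fin 2) k) :
    φ k q f = ∑ m ∈ f.support, coeff m f • u k q m := by
  conv_lhs => rw [f.as_sum]
  rw [map_sum]
  exact Finset.sum_congr rfl fun m _ => phi_monomial k q m _


variable (k : Type*) [Field k] (q : ℕ)

noncomputable def detP : MvPolynomial (Fin 2 × Fin 2) k :=
  X (0,0) * X (1,1) - X (0,1) * X (1,0)

lemma u_def (m : (Fin 2 × Fin 2) →₀ ℕ) :
    u k q m = if h : red m ∈ TS q then Pi.single (⟨red m, h⟩ : ↥(TS q)) (1:k) else 0 := rfl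




lemma u_eq_zero {m : (Fin 2 × Fin 2) →₀ ℕ} (h : red m ∉ TS q) : u k q m = 0 := by
  rw [u_def, dif_neg h]


lemma deg_eq (m : (Fin 2 × Fin 2) →₀ ℕ) :
    (m.sum fun _ e => e) = m (0,0) + m (0,1) + m (1,0) + m (1,1) := by
  rw [Finsupp.sum_fintype _ _ (fun _ => rfl), Fintype.sum_prod_type]
  simp [Fin.sum_univ_two]
  ring

/-- polynomials all of whose monomials have degree at least `n` -/
def degIdeal (n : ℕ) : Ideal (MvPolynomial (Fin 2 × Fin 2) k) where
  carrier := {f | ∀ d ∈ f.support, n ≤ d.sum fun _ e => e}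
  zero_mem' := by simp
  add_mem' := by
    intro f g hf hg d hd
    rcases Finset.mem_union.mp (MvPolynomial.support_add hd) with h | h
    · exact hf d h
    · exact hg d h
  smul_mem' := by
    intro r f hf d hd
    rw [smul_eq_mul] at hd
    obtain ⟨d1, hd1, d2, hd2, rfl⟩ := Finset.mem_add.mp (MvPolynomial.support_mul r f hd)
    rw [Finsupp.sum_add_index' (fun _ => rfl) (fun _ _ _ => rfl)]
    have := hf d2 hd2
    omega

lemma mul_mem_degIdeal {a b : ℕ} {f g : MvPolynomial (Fin 2 × Fin 2) k}
    (hf : f ∈ degIdeal k a) (hg : g ∈ degIdeal k b) : f * g ∈ degIdeal k (a + b) := by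
  intro d hd
  obtain ⟨d1, hd1, d2, hd2, rfl⟩ := Finset.mem_add.mp (MvPolynomial.support_mul f g hd)
  rw [Finsupp.sum_add_index' (fun _ => rfl) (fun _ _ _ => rfl)]
  have h1 := hf d1 hd1
  have h2 := hg d2 hd2
  omega

lemma pow_span_le (n : ℕ) :
    (Ideal.span (Set.range (X : Fin 2 × Fin 2 → MvPolynomial (Fin 2 × Fin 2) k))) ^ n ≤
      degIdeal k n := by
  induction n with
  | zero =>
    rw [pow_zero]
    intro f _ d _
    exact Nat.zero_le _
  | succ n ih =>
    rw [pow_succ]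
    refine Ideal.mul_le.mpr fun f hf g hg => ?_
    refine mul_mem_degIdeal k (ih hf) ?_
    revert hg
    refine fun hg => (Ideal.span_le.mpr ?_) hg
    rintro _ ⟨v, rfl⟩ d hd
    rw [MvPolynomial.support_X] at hd
    rw [Finset.mem_singleton] at hd
    subst hd
    simp [deg_eq, Finsupp.single_apply]

/-- the span-induction helper -/
lemma span_le_ker {s : Set (MvPolynomial (Fin 2 × Fin 2) k)}
    {K : Submodule k (MvPolynomial (Fin 2 × Fin 2) k)}
    (h : ∀ g ∈ s, ∀ d : (Fin 2 × Fin 2) →₀ ℕ, (monomial d 1) * g ∈ K) :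
    ∀ x ∈ Ideal.span s, x ∈ K := by
  intro x hx
  have main : ∀ f, f * x ∈ K := by
    refine Submodule.span_induction (p := fun y _ => ∀ f, f * y ∈ K) ?_ ?_ ?_ ?_ hx
    · intro g hg f
      rw [f.as_sum, Finset.sum_mul]
      refine Submodule.sum_mem _ fun d hd => ?_
      have he : monomial d (coeff d f) * g = (coeff d f) • (monomial d 1 * g) := by
        rw [← smul_mul_assoc, MvPolynomial.smul_monomial, smul_eq_mul, mul_one]
      rw [he]; exact K.smul_mem _ (h g hg d)
    · intro f; rw [mul_zero]; exact K.zero_mem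
    · intro y z _ _ hy hz f; rw [mul_add]; exact K.add_mem (hy f) (hz f)
    · intro r y _ hy f; rw [smul_eq_mul, ← mul_assoc]; exact hy (f * r)
  simpa using main 1

lemma A_le_ker {n : ℕ} (hn : 2 * q ≤ n) :
    ∀ x ∈ (Ideal.span (Set.range (X : Fin 2 × Fin 2 → MvPolynomial (Fin 2 × Fin 2) k))) ^ n,
      x ∈ LinearMap.ker (φ k q) := by
  intro x hx
  have hdeg := pow_span_le k n hx
  rw [LinearMap.mem_ker, phi_apply]
  refine Finset.sum_eq_zero fun m hm => ?_
  rw [u_eq_zero, smul_zero]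
  intro hmem
  have hd := hdeg m hm
  rw [deg_eq] at hd
  revert hmem
  simp only [red]
  rw [mem_TS]
  omega

lemma B_le_ker :
    ∀ x ∈ Ideal.span (Set.range fun v : Fin 2 × Fin 2 =>
        (X v : MvPolynomial (Fin 2 × Fin 2) k) ^ q),
      x ∈ LinearMap.ker (φ k q) := by
  refine span_le_ker k ?_
  rintro g ⟨v, rfl⟩ d
  rw [LinearMap.mem_ker]
  dsimp only
  rw [X_pow_eq_monomial, monomial_mul, mul_one, phi_monomial]
  rw [u_eq_zero, smul_zero]
  fin_cases v <;>
  · simp only [red, Finsupp.add_apply, Finsupp.single_apply, Prod.ext_iff]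
    rw [mem_TS]
    simp
    omega

lemma C_le_ker :
    ∀ x ∈ Ideal.span {detP k}, x ∈ LinearMap.ker (φ k q) := by
  refine span_le_ker k ?_
  intro g hg d
  rw [Set.mem_singleton_iff] at hg
  subst hg
  rw [LinearMap.mem_ker, detP, mul_sub]
  have hX : ∀ v w : Fin 2 × Fin 2,
      (X v * X w : MvPolynomial (Fin 2 × Fin 2) k) =
        monomial (Finsupp.single v 1 + Finsupp.single w 1) 1 := by
    intro v w
    rw [show (X v : MvPolynomial (Fin 2 × Fin 2) k) = monomial (Finsupp.single v 1) 1 from rfl,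
      show (X w : MvPolynomial (Fin 2 × Fin 2) k) = monomial (Finsupp.single w 1) 1 from rfl,
      monomial_mul, mul_one]
  rw [hX, hX, monomial_mul, mul_one, monomial_mul, mul_one, map_sub,
    phi_monomial, phi_monomial, one_smul, one_smul]
  have hred : red (d + (Finsupp.single ((0:Fin 2),(0:Fin 2)) 1 + Finsupp.single (1,1) 1)) =
      red (d + (Finsupp.single ((0:Fin 2),(1:Fin 2)) 1 + Finsupp.single (1,0) 1)) := by
    simp only [red, Finsupp.add_apply, Finsupp.single_apply, Prod.ext_iff, Prod.mk.injEq]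
    simp
    omega
  rw [u_def, u_def, hred]
  simp




lemma hXmul (v w : Fin 2 × Fin 2) :
    (X v * X w : MvPolynomial (Fin 2 × Fin 2) k) =
      monomial (Finsupp.single v 1 + Finsupp.single w 1) 1 := by
  rw [show (X v : MvPolynomial (Fin 2 × Fin 2) k) = monomial (Finsupp.single v 1) 1 from rfl,
    show (X w : MvPolynomial (Fin 2 × Fin 2) k) = monomial (Finsupp.single w 1) 1 from rfl,
    monomial_mul, mul_one]

lemma expv_step (a b c d : ℕ) :
    expv (a + 1, b, c, d + 1) = expv (a, b, c, d) + (Finsupp.single ((0:Fin 2),(0:Fin 2)) 1 +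
      Finsupp.single ((1:Fin 2),(1:Fin 2)) 1) := by
  have h1 : expv ((1:ℕ), (0:ℕ), (0:ℕ), (1:ℕ)) =
      Finsupp.single ((0:Fin 2),(0:Fin 2)) 1 + Finsupp.single ((1:Fin 2),(1:Fin 2)) 1 := by
    have := expv_coords (Finsupp.single ((0:Fin 2),(0:Fin 2)) 1 +
      Finsupp.single ((1:Fin 2),(1:Fin 2)) 1)
    rw [← this]
    congr 1 <;> simp [Finsupp.single_apply, Prod.ext_iff]
  rw [← h1]
  have := expv_add (a, b, c, d) (1, 0, 0, 1)
  simpa using this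

lemma expv_step2 (a b c d : ℕ) :
    expv (a, b + 1, c + 1, d) = expv (a, b, c, d) + (Finsupp.single ((0:Fin 2),(1:Fin 2)) 1 +
      Finsupp.single ((1:Fin 2),(0:Fin 2)) 1) := by
  have h1 : expv ((0:ℕ), (1:ℕ), (1:ℕ), (0:ℕ)) =
      Finsupp.single ((0:Fin 2),(1:Fin 2)) 1 + Finsupp.single ((1:Fin 2),(0:Fin 2)) 1 := by
    have := expv_coords (Finsupp.single ((0:Fin 2),(1:Fin 2)) 1 +
      Finsupp.single ((1:Fin 2),(0:Fin 2)) 1)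
    rw [← this]
    congr 1 <;> simp [Finsupp.single_apply, Prod.ext_iff]
  rw [← h1]
  have := expv_add (a, b, c, d) (0, 1, 1, 0)
  simpa using this

lemma detRel (t a b c d : ℕ) :
    (monomial (expv (a + t, b, c, d + t)) 1 : MvPolynomial (Fin 2 × Fin 2) k) -
      monomial (expv (a, b + t, c + t, d)) 1 ∈ Ideal.span {detP k} := by
  induction t generalizing b c with
  | zero => simp
  | succ n ih =>
    have step : (monomial (expv (a + (n+1), b, c, d + (n+1))) 1 : MvPolynomial (Fin 2 × Fin 2) k) -
        monomial (expv (a + n, b + 1, c + 1, d + n)) 1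
        = monomial (expv (a + n, b, c, d + n)) 1 * detP k := by
      rw [detP, mul_sub, hXmul, hXmul, monomial_mul, mul_one, monomial_mul, mul_one,
        show ((a+(n+1):ℕ), (b:ℕ), (c:ℕ), (d+(n+1):ℕ)) = ((a+n)+1, b, c, (d+n)+1) from by
          simp only [Prod.mk.injEq]; exact ⟨rfl, trivial, trivial, rfl⟩,
        expv_step, expv_step2]
    have hstepmem : (monomial (expv (a + (n+1), b, c, d + (n+1))) 1 :
        MvPolynomial (Fin 2 × Fin 2) k) - monomial (expv (a + n, b + 1, c + 1, d + n)) 1 ∈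
        Ideal.span {detP k} := by
      rw [step]
      exact Ideal.mul_mem_left _ _ (Ideal.mem_span_singleton_self _)
    have h2 := ih (b+1) (c+1)
    rw [show ((a:ℕ), (b+1+n:ℕ), (c+1+n:ℕ), (d:ℕ)) = (a, b+(n+1), c+(n+1), d) from by
      simp only [Prod.mk.injEq, true_and, and_true]; constructor <;> omega] at h2
    have h3 := Submodule.add_mem _ hstepmem h2
    rwa [sub_add_sub_cancel] at h3

lemma mem_spanq_of_ge {m : (Fin 2 × Fin 2) →₀ ℕ} (v : Fin 2 × Fin 2) (h : q ≤ m v) :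
    (monomial m 1 : MvPolynomial (Fin 2 × Fin 2) k) ∈
      Ideal.span (Set.range fun v : Fin 2 × Fin 2 =>
        (X v : MvPolynomial (Fin 2 × Fin 2) k) ^ q) := by
  have hm : m = (m - Finsupp.single v q) + Finsupp.single v q := by
    ext w
    rw [Finsupp.add_apply, Finsupp.tsub_apply]
    rcases eq_or_ne w v with rfl | hw
    · rw [Finsupp.single_eq_same]; omega
    · rw [Finsupp.single_eq_of_ne hw]; omega
  rw [hm, ← mul_one (1:k), ← monomial_mul]
  refine Ideal.mul_mem_left _ _ ?_
  rw [← X_pow_eq_monomial]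
  exact Ideal.subset_span ⟨v, rfl⟩




noncomputable def θ : (↥(TS q) → k) →ₗ[k] MvPolynomial (Fin 2 × Fin 2) k where
  toFun w := ∑ x ∈ (TS q).attach, w x • monomial (expv x.1) 1
  map_add' := by
    intro w1 w2
    simp [add_smul, Finset.sum_add_distrib]
  map_smul' := by
    intro c w
    simp [Finset.smul_sum, smul_smul]

lemma theta_single (x : ↥(TS q)) :
    θ k q (Pi.single x (1:k)) = monomial (expv x.1) 1 := by
  rw [show θ k q (Pi.single x (1:k))
    = ∑ y ∈ (TS q).attach, (Pi.single x (1:k) : ↥(TS q) → k) y • monomial (expv y.1) 1 from rfl]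
  refine (Finset.sum_eq_single x ?_ ?_).trans ?_
  · intro b _ hb
    rw [Pi.single_eq_of_ne hb, zero_smul]
  · intro h
    exact absurd (Finset.mem_attach _ x) h
  · rw [Pi.single_eq_same, one_smul]

lemma phi_theta (w : ↥(TS q) → k) : φ k q (θ k q w) = w := by
  rw [show θ k q w = ∑ x ∈ (TS q).attach, w x • monomial (expv x.1) 1 from rfl]
  rw [map_sum]
  have h1 : ∀ x ∈ (TS q).attach, φ k q (w x • monomial (expv x.1) 1)
      = Pi.single x (w x) := by
    intro x _
    rw [map_smul]
    have h2 : φ k q (monomial (expv x.1) 1) = Pi.single x (1:k) := by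
      have h3 := phi_monomial k q (expv x.1) 1
      rw [one_smul] at h3
      rw [h3, u_def]
      obtain ⟨⟨a, b, c, d⟩, hx⟩ := x
      have hmem := hx
      rw [mem_TS] at hmem
      have hred : red (expv (a, b, c, d)) = (a, b, c, d) := red_expv (by dsimp only; omega)
      rw [hred, dif_pos hx]
    rw [h2]
    rw [← Pi.single_smul, smul_eq_mul, mul_one]
  rw [Finset.sum_congr rfl h1, ← Finset.univ_eq_attach, Finset.univ_sum_single]

lemma key_mem (m : (Fin 2 × Fin 2) →₀ ℕ) :
    (monomial m 1 : MvPolynomial (Fin 2 × Fin 2) k) - θ k q (u k q m) ∈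
      Ideal.span (Set.range fun v : Fin 2 × Fin 2 =>
        (X v : MvPolynomial (Fin 2 × Fin 2) k) ^ q) ⊔ Ideal.span {detP k} := by
  have hdiff : (monomial m 1 : MvPolynomial (Fin 2 × Fin 2) k) -
      monomial (expv (red m)) 1 ∈ Ideal.span {detP k} := by
    have h := detRel k (min (m (0,0)) (m (1,1))) (m (0,0) - min (m (0,0)) (m (1,1)))
      (m (0,1)) (m (1,0)) (m (1,1) - min (m (0,0)) (m (1,1)))
    rw [show (m (0,0) - min (m (0,0)) (m (1,1)) + min (m (0,0)) (m (1,1)), m (0,1), m (1,0),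
        m (1,1) - min (m (0,0)) (m (1,1)) + min (m (0,0)) (m (1,1)))
        = (m (0,0), m (0,1), m (1,0), m (1,1)) from by
      simp only [Prod.mk.injEq, true_and, and_true]; constructor <;> omega] at h
    rw [expv_coords] at h
    rw [show red m = (m (0,0) - min (m (0,0)) (m (1,1)), m (0,1) + min (m (0,0)) (m (1,1)),
      m (1,0) + min (m (0,0)) (m (1,1)), m (1,1) - min (m (0,0)) (m (1,1))) from rfl]
    exact h
  by_cases hin : red m ∈ TS q
  · rw [u_def, dif_pos hin, theta_single]
    exact Submodule.mem_sup_right hdiff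
  · rw [u_def, dif_neg hin, map_zero, sub_zero]
    have hmin : min (red m).1 (red m).2.2.2 = 0 := by
      simp only [red]; omega
    have hmain : (monomial (expv (red m)) 1 : MvPolynomial (Fin 2 × Fin 2) k) ∈
        Ideal.span (Set.range fun v : Fin 2 × Fin 2 =>
          (X v : MvPolynomial (Fin 2 × Fin 2) k) ^ q) ⊔ Ideal.span {detP k} := by
      rcases hrm : red m with ⟨a, b, c, d⟩
      rw [hrm] at hmin hin
      dsimp only at hmin
      rw [mem_TS] at hin
      have hcases : q ≤ b ∨ q ≤ c ∨ q ≤ a ∨ q ≤ d ∨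
          (b < q ∧ c < q ∧ a < q ∧ d < q ∧ q ≤ a + d + min b c) := by omega
      rcases hcases with hc | hc | hc | hc | ⟨hb, hcc, ha, hd, hc⟩
      · exact Submodule.mem_sup_left (mem_spanq_of_ge k q (0,1)
          (by rw [expv_apply_01]; exact hc))
      · exact Submodule.mem_sup_left (mem_spanq_of_ge k q (1,0)
          (by rw [expv_apply_10]; exact hc))
      · exact Submodule.mem_sup_left (mem_spanq_of_ge k q (0,0)
          (by rw [expv_apply_00]; exact hc))
      · exact Submodule.mem_sup_left (mem_spanq_of_ge k q (1,1)
          (by rw [expv_apply_11]; exact hc))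
      · rcases (by omega : d = 0 ∨ a = 0) with rfl | rfl
        · -- d = 0 case : a + min b c ≥ q
          have h := detRel k (min b c) a (b - min b c) (c - min b c) 0
          rw [show ((a:ℕ), (b - min b c + min b c : ℕ), (c - min b c + min b c : ℕ), (0:ℕ))
              = (a, b, c, 0) from by
            simp only [Prod.mk.injEq, true_and, and_true]; constructor <;> omega] at h
          have h1 : (monomial (expv (a + min b c, b - min b c, c - min b c, 0 + min b c)) 1 :
              MvPolynomial (Fin 2 × Fin 2) k) ∈
              Ideal.span (Set.range fun v : Fin 2 × Fin 2 =>
                (X v : MvPolynomial (Fin 2 × Fin 2) k) ^ q) :=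
            mem_spanq_of_ge k q (0,0) (by rw [expv_apply_00]; dsimp only; omega)
          rw [show (monomial (expv (a, b, c, 0)) 1 : MvPolynomial (Fin 2 × Fin 2) k)
              = monomial (expv (a + min b c, b - min b c, c - min b c, 0 + min b c)) 1 -
                (monomial (expv (a + min b c, b - min b c, c - min b c, 0 + min b c)) 1 -
                  monomial (expv (a, b, c, 0)) 1) from (sub_sub_cancel _ _).symm]
          exact Submodule.sub_mem _ (Submodule.mem_sup_left h1) (Submodule.mem_sup_right h)
        · -- a = 0 case : d + min b c ≥ q
          have h := detRel k (min b c) 0 (b - min b c) (c - min b c) d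
          rw [show ((0:ℕ), (b - min b c + min b c : ℕ), (c - min b c + min b c : ℕ), (d:ℕ))
              = (0, b, c, d) from by
            simp only [Prod.mk.injEq, true_and, and_true]; constructor <;> omega] at h
          have h1 : (monomial (expv (0 + min b c, b - min b c, c - min b c, d + min b c)) 1 :
              MvPolynomial (Fin 2 × Fin 2) k) ∈
              Ideal.span (Set.range fun v : Fin 2 × Fin 2 =>
                (X v : MvPolynomial (Fin 2 × Fin 2) k) ^ q) :=
            mem_spanq_of_ge k q (1,1) (by rw [expv_apply_11]; dsimp only; omega)
          rw [show (monomial (expv (0, b, c, d)) 1 : MvPolynomial (Fin 2 × Fin 2) k)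
              = monomial (expv (0 + min b c, b - min b c, c - min b c, d + min b c)) 1 -
                (monomial (expv (0 + min b c, b - min b c, c - min b c, d + min b c)) 1 -
                  monomial (expv (0, b, c, d)) 1) from (sub_sub_cancel _ _).symm]
          exact Submodule.sub_mem _ (Submodule.mem_sup_left h1) (Submodule.mem_sup_right h)
    have heq : (monomial m 1 : MvPolynomial (Fin 2 × Fin 2) k)
        = (monomial m 1 - monomial (expv (red m)) 1) + monomial (expv (red m)) 1 :=
      (sub_add_cancel _ _).symm
    rw [heq]
    exact Submodule.add_mem _ (Submodule.mem_sup_right hdiff) hmain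

lemma main_count (sqn : ℕ) (hsq : 2 * q ≤ sqn) :
    Module.finrank k
      (MvPolynomial (Fin 2 × Fin 2) k ⧸
        (Ideal.span (Set.range (MvPolynomial.X : Fin 2 × Fin 2 → MvPolynomial (Fin 2 × Fin 2) k)) ^ sqn
          ⊔ Ideal.span (Set.range fun v : Fin 2 × Fin 2 =>
              (MvPolynomial.X v : MvPolynomial (Fin 2 × Fin 2) k) ^ q)
          ⊔ Ideal.span {(MvPolynomial.X (0, 0) * MvPolynomial.X (1, 1) -
              MvPolynomial.X (0, 1) * MvPolynomial.X (1, 0) :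
                MvPolynomial (Fin 2 × Fin 2) k)})) = (TS q).card := by
  set J : Ideal (MvPolynomial (Fin 2 × Fin 2) k) :=
    Ideal.span (Set.range (MvPolynomial.X : Fin 2 × Fin 2 → MvPolynomial (Fin 2 × Fin 2) k)) ^ sqn
      ⊔ Ideal.span (Set.range fun v : Fin 2 × Fin 2 =>
          (MvPolynomial.X v : MvPolynomial (Fin 2 × Fin 2) k) ^ q)
      ⊔ Ideal.span {(MvPolynomial.X (0, 0) * MvPolynomial.X (1, 1) -
          MvPolynomial.X (0, 1) * MvPolynomial.X (1, 0) : MvPolynomial (Fin 2 × Fin 2) k)}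
    with hJ
  have hdet : (MvPolynomial.X (0, 0) * MvPolynomial.X (1, 1) -
      MvPolynomial.X (0, 1) * MvPolynomial.X (1, 0) : MvPolynomial (Fin 2 × Fin 2) k)
      = detP k := rfl
  -- J ⊆ ker φ
  have hJker : ∀ x ∈ J, x ∈ LinearMap.ker (φ k q) := by
    intro x hx
    rw [hJ, Submodule.mem_sup] at hx
    obtain ⟨y, hy, z, hz, rfl⟩ := hx
    rw [Submodule.mem_sup] at hy
    obtain ⟨y1, hy1, y2, hy2, rfl⟩ := hy
    rw [hdet] at hz
    exact Submodule.add_mem _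
      (Submodule.add_mem _ (A_le_ker k q hsq y1 hy1) (B_le_ker k q y2 hy2))
      (C_le_ker k q z hz)
  -- spanning : f - θ (φ f) ∈ J
  have hBC_le : Ideal.span (Set.range fun v : Fin 2 × Fin 2 =>
      (X v : MvPolynomial (Fin 2 × Fin 2) k) ^ q) ⊔ Ideal.span {detP k} ≤ J := by
    rw [hJ, hdet]
    exact sup_le (le_sup_of_le_left le_sup_right) le_sup_right
  have hspan : ∀ f : MvPolynomial (Fin 2 × Fin 2) k, f - θ k q (φ k q f) ∈ J := by
    intro f
    have h1 : f - θ k q (φ k q f)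
        = ∑ m ∈ f.support, (coeff m f) • (monomial m 1 - θ k q (u k q m)) := by
      rw [phi_apply, map_sum]
      nth_rewrite 1 [f.as_sum]
      rw [← Finset.sum_sub_distrib]
      refine Finset.sum_congr rfl fun m _ => ?_
      rw [smul_sub, map_smul]
      congr 1
      rw [MvPolynomial.smul_monomial, smul_eq_mul, mul_one]
    rw [h1]
    refine Submodule.sum_mem _ fun m _ => ?_
    rw [MvPolynomial.smul_eq_C_mul]
    exact Ideal.mul_mem_left _ _ (hBC_le (key_mem k q m))
  -- the linear map from functions to the quotient
  set L : (↥(TS q) → k) →ₗ[k] (MvPolynomial (Fin 2 × Fin 2) k ⧸ J) :=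
    (Ideal.Quotient.mkₐ k J).toLinearMap ∘ₗ θ k q with hL
  have hLinj : Function.Injective L := by
    rw [← LinearMap.ker_eq_bot, LinearMap.ker_eq_bot']
    intro w hw
    have h2 : θ k q w ∈ J := by
      rw [← Ideal.Quotient.eq_zero_iff_mem]
      exact hw
    have h3 := hJker _ h2
    rw [LinearMap.mem_ker, phi_theta] at h3
    exact h3
  have hLsurj : Function.Surjective L := by
    intro y
    obtain ⟨f, rfl⟩ := Ideal.Quotient.mk_surjective y
    refine ⟨φ k q f, ?_⟩
    show Ideal.Quotient.mkₐ k J (θ k q (φ k q f)) = Ideal.Quotient.mk J f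
    rw [Ideal.Quotient.mkₐ_eq_mk, Ideal.Quotient.eq]
    have := J.neg_mem (hspan f)
    simpa using this
  have hequiv := LinearEquiv.ofBijective L ⟨hLinj, hLsurj⟩
  rw [← hequiv.finrank_eq, Module.finrank_pi, Fintype.card_coe]


end Stmt16Aux

/-- For `X` a `2×2` matrix of variables over a field `k` of characteristic `p`,
`q = pᵉ`, and `s ≥ 2` with `sq ∈ ℤ`, the `k`-dimension of
`k[X]/(𝔪^{sq} + 𝔪^{[q]} + I₂(X))` equals `(4/3)q³ − (1/3)q`. -/
theorem stmt16 (k : Type*) [Field k] (p : ℕ) (hp : p.Prime) [CharP k p] (e : ℕ)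
    (s : ℝ) (hs : 2 ≤ s) (sq : ℕ) (hsq : (sq : ℝ) = s * (p : ℝ) ^ e) :
    (Module.finrank k
      (MvPolynomial (Fin 2 × Fin 2) k ⧸
        (Ideal.span (Set.range (MvPolynomial.X : Fin 2 × Fin 2 → MvPolynomial (Fin 2 × Fin 2) k)) ^ sq
          ⊔ Ideal.span (Set.range fun v : Fin 2 × Fin 2 =>
              (MvPolynomial.X v : MvPolynomial (Fin 2 × Fin 2) k) ^ p ^ e)
          ⊔ Ideal.span {(MvPolynomial.X (0, 0) * MvPolynomial.X (1, 1) -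
              MvPolynomial.X (0, 1) * MvPolynomial.X (1, 0) :
                MvPolynomial (Fin 2 × Fin 2) k)})) : ℝ)
    = 4 / 3 * ((p : ℝ) ^ e) ^ 3 - 1 / 3 * (p : ℝ) ^ e := by
  have hppos : 0 < p := hp.pos
  have h2q : 2 * p ^ e ≤ sq := by
    have h1 : ((2 * p ^ e : ℕ) : ℝ) ≤ (sq : ℝ) := by
      rw [hsq]
      push_cast
      have hq0 : (0:ℝ) ≤ (p:ℝ) ^ e := by positivity
      nlinarith
    exact_mod_cast h1
  rw [Stmt16Aux.main_count k (p ^ e) sq h2q]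
  have h3 := Stmt16Aux.card_TS (p ^ e)
  have hle : p ^ e ≤ 4 * (p ^ e) ^ 3 := by
    have h6 : p ^ e ≤ (p ^ e) ^ 3 := Nat.le_self_pow (by norm_num) _
    omega
  have h5 : ((3 * (Stmt16Aux.TS (p ^ e)).card : ℕ) : ℝ)
      = ((4 * (p ^ e) ^ 3 - p ^ e : ℕ) : ℝ) := by rw [h3]
  rw [Nat.cast_mul, Nat.cast_sub hle] at h5
  push_cast at h5
  linarith
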